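/- An assignment χ of Boolean values to the relational variables violates some transitivity constraint if and only if some cycle in the labeled graph G(E,χ) contains exactly one 0-edge. -/

import Mathlib

/-- The list of edges of the cycle determined by vertex list `l = [i₁,…,i_k]`:
successive pairs plus the closing edge `(i_k, i₁)`. -/
def cycEdges (l : List ℕ) : List (ℕ × ℕ) := l.zip (l.rotate 1)

/-- `l` is (the vertex list of) a cycle in the graph `G(E)`. -/
def IsCycle (E : ℕ → ℕ → Prop) (l : List ℕ) : Prop :=
  3 ≤ l.length ∧ ∀ p ∈ cycEdges l, E p.1 p.2

/-- The number of 0-edges of the cycle `l` under the labeling `χ`. -/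
def numZeroEdges (χ : ℕ → ℕ → Bool) (l : List ℕ) : ℕ :=
  ((cycEdges l).filter (fun p => !χ p.1 p.2)).length

/-- The assignment `χ` violates some transitivity constraint
`e_{[i₁,i₂]} ∧ ⋯ ∧ e_{[i_{k-1},i_k]} ⇒ e_{[i₁,i_k]}` over `E`. -/
def ViolatesTrans (E : ℕ → ℕ → Prop) (χ : ℕ → ℕ → Bool) : Prop :=
  ∃ l : List ℕ, 3 ≤ l.length ∧ l.Chain' E ∧
    (∀ p ∈ l.zip l.tail, χ p.1 p.2 = true) ∧
    E (l.headD 0) (l.getLastD 0) ∧ χ (l.headD 0) (l.getLastD 0) = false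

/-- The simple cycle (or acyclic path) `l` has a chord: an edge of `G(E)` joining two
vertices at positions `p < q` that are not adjacent in the cycle. -/
def HasChord (E : ℕ → ℕ → Prop) (l : List ℕ) : Prop :=
  ∃ p q : ℕ, p < q ∧ q < l.length ∧ p + 1 < q ∧ ¬(p = 0 ∧ q = l.length - 1) ∧
    E (l.getD p 0) (l.getD q 0)
lemma zip_rotate {α β : Type*} (l : List α) (m : List β) (h : l.length = m.length) (n : ℕ) :
    (l.rotate n).zip (m.rotate n) = (l.zip m).rotate n := by
  rcases Nat.eq_zero_or_pos l.length with h0 | hl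
  · have hle : l = [] := List.length_eq_zero_iff.mp h0
    have hme : m = [] := List.length_eq_zero_iff.mp (h ▸ h0)
    subst hle; subst hme; simp
  · have hm : m.length = l.length := h.symm
    have hz : (l.zip m).length = l.length := by rw [List.length_zip, h, min_self]
    rw [← List.rotate_mod l n, ← List.rotate_mod m n, ← List.rotate_mod (l.zip m) n, hm, hz]
    set k := n % l.length with hk
    have hkl : k ≤ l.length := le_of_lt (Nat.mod_lt _ hl)
    have hkm : k ≤ m.length := by rw [hm]; exact hkl
    have hzip : l.zip m = (l.take k).zip (m.take k) ++ (l.drop k).zip (m.drop k) := by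
      conv_lhs => rw [← List.take_append_drop k l, ← List.take_append_drop k m]
      exact List.zip_append (by rw [List.length_take, List.length_take, h])
    have hA : ((l.take k).zip (m.take k)).length = k := by
      rw [List.length_zip, List.length_take, List.length_take, h, min_self,
        min_eq_left (by rw [← h]; exact hkl)]
    rw [List.rotate_eq_drop_append_take hkl, List.rotate_eq_drop_append_take hkm,
      List.zip_append (by rw [List.length_drop, List.length_drop, h]),
      hzip, List.rotate_eq_drop_append_take (by rw [← hzip, hz]; exact hkl),
      List.drop_left' hA, List.take_left' hA]

lemma cycEdges_rotate (l : List ℕ) (n : ℕ) : cycEdges (l.rotate n) = (cycEdges l).rotate n := by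
  unfold cycEdges
  have : (l.rotate n).rotate 1 = (l.rotate 1).rotate n := by
    rw [List.rotate_rotate, List.rotate_rotate, Nat.add_comm]
  rw [this]
  exact zip_rotate _ _ (by simp) n

lemma zip_rot_aux (b : ℕ) : ∀ (t : List ℕ) (a : ℕ),
    (a :: t).zip (t ++ [b]) = (a :: t).zip t ++ [((a :: t).getLast (by simp), b)]
  | [], a => by simp
  | c :: t', a => by
    have ih := zip_rot_aux b t' c
    simp only [List.cons_append, List.zip_cons_cons, ih, List.getLast_cons (by simp : c :: t' ≠ [])]


lemma cycEdges_eq (a : ℕ) (t : List ℕ) :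
    cycEdges (a :: t) = (a :: t).zip t ++ [((a :: t).getLast (by simp), a)] := by
  unfold cycEdges
  rw [show (a::t).rotate 1 = t ++ [a] by rw [List.rotate_cons_succ, List.rotate_zero]]
  exact zip_rot_aux a t a

lemma chain'_iff_zip {R : ℕ → ℕ → Prop} : ∀ (l : List ℕ),
    l.Chain' R ↔ ∀ p ∈ l.zip l.tail, R p.1 p.2
  | [] => by simp [List.Chain']
  | [a] => by simp [List.Chain']
  | a :: b :: t => by
    rw [show List.Chain' R (a :: b :: t) ↔ R a b ∧ List.Chain' R (b :: t) from List.isChain_cons_cons, chain'_iff_zip (b :: t)]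
    simp [List.zip_cons_cons]

lemma getLastD_cons_eq (a : ℕ) (t : List ℕ) :
    (a :: t).getLastD 0 = (a :: t).getLast (by simp) := by
  simp [List.getLastD_eq_getLast?, List.getLast?_eq_getLast]
theorem stmt0 (N : ℕ) (E : ℕ → ℕ → Prop) (χ : ℕ → ℕ → Bool)
    (hEsym : Symmetric E) (hχsym : ∀ i j, χ i j = χ j i)
    (hEdom : ∀ i j, E i j → i < N ∧ j < N ∧ i ≠ j) :
    ViolatesTrans E χ ↔ ∃ l : List ℕ, IsCycle E l ∧ numZeroEdges χ l = 1 := by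
  constructor
  · rintro ⟨l, hlen, hchain, hones, hEhl, hχhl⟩
    obtain ⟨a, t, rfl⟩ : ∃ a t, l = a :: t := by
      cases l with
      | nil => simp at hlen
      | cons a t => exact ⟨a, t, rfl⟩
    have hLast : (a :: t).getLastD 0 = (a :: t).getLast (by simp) := getLastD_cons_eq a t
    rw [List.headD_cons, hLast] at hEhl hχhl
    set L := (a :: t).getLast (by simp) with hL
    refine ⟨a :: t, ⟨hlen, ?_⟩, ?_⟩
    · intro p hp
      rw [cycEdges_eq] at hp
      rcases List.mem_append.mp hp with hp | hp
      · exact (chain'_iff_zip (a :: t)).mp hchain p hp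
      · simp only [List.mem_singleton] at hp
        subst hp
        exact hEsym hEhl
    · unfold numZeroEdges
      rw [cycEdges_eq, List.filter_append]
      have h1 : ((a :: t).zip t).filter (fun p => !χ p.1 p.2) = [] := by
        rw [List.filter_eq_nil_iff]
        intro p hp
        simp [hones p hp]
      have h2 : χ L a = false := by rw [hχsym]; exact hχhl
      simp [h1, ← hL, h2]
  · rintro ⟨l, ⟨hlen, hE⟩, hnum⟩
    have hlpos : 0 < l.length := by omega
    have hce : (cycEdges l).length = l.length := by
      unfold cycEdges; rw [List.length_zip, List.length_rotate, min_self]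
    -- find index of the zero edge
    have hne : ((cycEdges l).filter (fun p => !χ p.1 p.2)) ≠ [] := by
      intro h; rw [numZeroEdges, h] at hnum; simp at hnum
    obtain ⟨e, he⟩ := List.exists_mem_of_ne_nil _ hne
    have hem := List.mem_filter.mp he
    obtain ⟨k, hk, hke⟩ := List.getElem_of_mem (List.mem_filter.mp he).1
    rw [hce] at hk
    set l' := l.rotate (k + 1) with hl'
    have hlen' : l'.length = l.length := List.length_rotate l (k+1)
    obtain ⟨a, t, hat⟩ : ∃ a t, l' = a :: t := by
      cases hl2 : l' with
      | nil => rw [hl2] at hlen'; simp at hlen'; omega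
      | cons a t => exact ⟨a, t, rfl⟩
    have hceR : cycEdges l' = (cycEdges l).rotate (k + 1) := cycEdges_rotate l (k+1)
    have hmem : ∀ p ∈ cycEdges l', E p.1 p.2 := by
      intro p hp
      rw [hceR] at hp
      exact hE p ((List.rotate_perm _ _).mem_iff.mp hp)
    have hnum' : numZeroEdges χ l' = 1 := by
      unfold numZeroEdges
      rw [hceR, ((List.rotate_perm (cycEdges l) (k+1)).filter _).length_eq]
      exact hnum
    set L := (a :: t).getLast (by simp) with hL
    have hdecomp : cycEdges l' = (a :: t).zip t ++ [(L, a)] := by rw [hat]; exact cycEdges_eq a t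
    -- the last edge of cycEdges l' is the zero edge
    have hZlen : ((a :: t).zip t).length = l.length - 1 := by
      rw [List.length_zip]
      have : (a :: t).length = l.length := by rw [← hat, hlen']
      simp at this ⊢; omega
    have hlast : (cycEdges l')[l.length - 1]'(by rw [hceR, List.length_rotate, hce]; omega) = e := by
      rw [List.getElem_of_eq hceR, List.getElem_rotate]
      simp only [hce]
      have : (l.length - 1 + (k + 1)) % l.length = k := by
        rw [show l.length - 1 + (k + 1) = l.length + k by omega, Nat.add_mod_left,
          Nat.mod_eq_of_lt hk]
      simp only [this]
      exact hke
    have hlast2 : (cycEdges l')[l.length - 1]'(by rw [hceR, List.length_rotate, hce]; omega)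
        = (L, a) := by
      rw [List.getElem_of_eq hdecomp, List.getElem_append_right (by omega)]
      simp [hZlen]
    have heLa : e = (L, a) := by rw [← hlast, hlast2]
    have hχLa : χ L a = false := by
      have := hem.2
      rw [heLa] at this
      simpa using this
    -- all other edges are one-edges
    have hZone : ∀ p ∈ (a :: t).zip t, χ p.1 p.2 = true := by
      have : (((a :: t).zip t).filter (fun p => !χ p.1 p.2)).length + 1 = 1 := by
        have := hnum'
        unfold numZeroEdges at this
        rw [hdecomp, List.filter_append] at this
        simpa [hχLa] using this
      have hnil : ((a :: t).zip t).filter (fun p => !χ p.1 p.2) = [] :=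
        List.length_eq_zero_iff.mp (by omega)
      intro p hp
      have := List.filter_eq_nil_iff.mp hnil p hp
      simpa using this
    refine ⟨l', ?_, ?_, ?_, ?_, ?_⟩
    · omega
    · rw [hat]
      exact (chain'_iff_zip (a :: t)).mpr (fun p hp =>
        hmem p (by rw [hdecomp]; exact List.mem_append_left _ hp))
    · rw [hat]; simpa using hZone
    · rw [hat, List.headD_cons, getLastD_cons_eq]
      exact hEsym (hmem (L, a) (by rw [hdecomp]; exact List.mem_append_right _ (by simp)))
    · rw [hat, List.headD_cons, getLastD_cons_eq, ← hL, hχsym]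
      exact hχLa
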